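/- Let (S,·) be a semigroup such that there exists a non-principal idempotent ultrafilter e on S, and for each m ∈ {1,…,k} let [S]^m be finitely coloured. Then there exist, for each m ∈ {1,…,k}, a monochrome set A^{(m)} ⊆ [S]^m, and a single tree T ⊆ S^{<ω} such that for all f ∈ T one has T(f) ∈ e, and for every m ∈ {1,…,k} and all α_1 < α_2 < … < α_m ⊆ dom f with each α_j ∈ P_f(ω) one has {∏_{t∈α_1} f(t), ∏_{t∈α_2} f(t), …, ∏_{t∈α_m} f(t)} ∈ A^{(m)}. -/

import Mathlib

/- The semigroup structure on `βS = Ultrafilter S`, with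
`A ∈ p * q ↔ {s | {t | s * t ∈ A} ∈ q} ∈ p`. -/
attribute [local instance] Ultrafilter.mul Ultrafilter.semigroup

/-- The ordered product of a `Monoid`-valued function over a finite set of
natural-number indices, the factors being taken in increasing order of the indices. -/
def oListProd {M : Type*} [Monoid M] (f : ℕ → M) (α : Finset ℕ) : M :=
  ((α.sort (· ≤ ·)).map f).prod

/-- A finite sequence in `S` is a list; a nonempty `T ⊆ S^{<ω}` is a tree iff it is
closed under restrictions, i.e. under taking prefixes. -/
def IsTree {S : Type*} (T : Set (List S)) : Prop :=
  T.Nonempty ∧ ∀ g ∈ T, ∀ f : List S, f <+: g → f ∈ T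

/-- `T(f) = {s ∈ S : f⌢s ∈ T}`. -/
def treeSucc {S : Type*} (T : Set (List S)) (f : List S) : Set S :=
  {s | f ++ [s] ∈ T}

/-- The ordered product `∏_{t ∈ α} f(t)` of entries of the finite sequence `f`,
taken in increasing order of indices and computed in `WithOne S` (indices outside the
domain of `f` contribute the unit; in all uses `α ⊆ dom f`). -/
def lProd {S : Type*} [Semigroup S] (f : List S) (α : Finset ℕ) : WithOne S :=
  oListProd (fun t => (f[t]?.elim (1 : WithOne S) (fun s => (s : WithOne S)))) α

namespace STRL

open Filter

variable {S : Type*} [Semigroup S] [DecidableEq S]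

/-! ### star sets -/

def star (e : Ultrafilter S) (A : Set S) : Set S := {x | x ∈ A ∧ {t | x * t ∈ A} ∈ e}

lemma star_subset (e : Ultrafilter S) (A : Set S) : star e A ⊆ A := fun _ h => h.1

lemma mul_mem_iff (p q : Ultrafilter S) (A : Set S) :
    A ∈ p * q ↔ {s | {t | s * t ∈ A} ∈ q} ∈ p := by
  have := Ultrafilter.eventually_mul p q (· ∈ A)
  simpa [Filter.eventually_iff, Ultrafilter.mem_coe] using this

lemma star_mem (e : Ultrafilter S) (hid : e * e = e) {A : Set S} (hA : A ∈ e) :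
    star e A ∈ e := by
  have h2 : A ∈ e * e := by rw [hid]; exact hA
  rw [mul_mem_iff] at h2
  exact inter_mem hA h2

lemma star_step (e : Ultrafilter S) (hid : e * e = e) {A : Set S} {x : S}
    (hx : x ∈ star e A) : {t | x * t ∈ star e A} ∈ e := by
  have h1 : {t | x * t ∈ A} ∈ e := hx.2
  have h2 : {t | x * t ∈ A} ∈ e * e := by rw [hid]; exact h1
  rw [mul_mem_iff] at h2
  have h3 : {t | {u | (x * t) * u ∈ A} ∈ e} ∈ e := by
    refine mem_of_superset h2 fun t ht => ?_
    simpa [mul_assoc] using ht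
  refine mem_of_superset (inter_mem h1 h3) fun t ht => ?_
  exact ⟨ht.1, ht.2⟩

/-! ### colour selection -/

lemma exists_col (e : Ultrafilter S) {N : ℕ} (g : S → Fin N) :
    ∃ j : Fin N, {x | g x = j} ∈ e := by
  have hu : (⋃ j ∈ (Set.univ : Set (Fin N)), {x | g x = j}) ∈ e := by
    refine mem_of_superset univ_mem fun x _ => ?_
    simp only [Set.mem_iUnion]
    exact ⟨g x, Set.mem_univ _, rfl⟩
  obtain ⟨j, _, hj⟩ := (Ultrafilter.finite_biUnion_mem_iff Set.finite_univ).1 hu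
  exact ⟨j, hj⟩

noncomputable def colAux (e : Ultrafilter S) {N : ℕ} (c : Finset S → Fin N) :
    ℕ → List S → Fin N
  | 0, l => c l.toFinset
  | d+1, l => (exists_col e (fun x => colAux e c d (l ++ [x]))).choose

lemma colAux_succ_mem (e : Ultrafilter S) {N : ℕ} (c : Finset S → Fin N) (d : ℕ)
    (l : List S) : {x | colAux e c d (l ++ [x]) = colAux e c (d+1) l} ∈ e :=
  (exists_col e (fun x => colAux e c d (l ++ [x]))).choose_spec

lemma notin_list_mem (e : Ultrafilter S) (hnp : ∀ s : S, e ≠ pure s) (l : List S) :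
    {x | x ∉ l} ∈ e := by
  by_contra h
  have h2 : {x | x ∈ l} ∈ e := by
    have : {x | x ∉ l} = {x | x ∈ l}ᶜ := rfl
    rw [this] at h
    exact Ultrafilter.compl_notMem_iff.1 h
  obtain ⟨a, _, ha⟩ := Ultrafilter.eq_pure_of_finite_mem (List.finite_toSet l) h2
  exact hnp a ha

/-! ### the iterated largeness predicate -/

def SQAux (e : Ultrafilter S) {N : ℕ} (c : Finset S → Fin N) (i : Fin N) :
    ℕ → List S → Prop
  | 0, l => l.Nodup ∧ c l.toFinset = i
  | d+1, l => {x | SQAux e c i d (l ++ [x])} ∈ e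

def Ed (e : Ultrafilter S) {N : ℕ} (c : Finset S → Fin N) (i : Fin N)
    (d : ℕ) (l : List S) : Set S := {x | SQAux e c i d (l ++ [x])}

lemma sqaux_succ (e : Ultrafilter S) {N : ℕ} (c : Finset S → Fin N) (i : Fin N)
    (d : ℕ) (l : List S) : SQAux e c i (d+1) l ↔ Ed e c i d l ∈ e := Iff.rfl

lemma colAux_step (e : Ultrafilter S) (hnp : ∀ s : S, e ≠ pure s) {N : ℕ}
    (c : Finset S → Fin N) {i : Fin N} (d : ℕ) {l : List S} (hl : l.Nodup)
    (hc : colAux e c (d+1) l = i) :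
    {x | (l ++ [x]).Nodup ∧ colAux e c d (l ++ [x]) = i} ∈ e := by
  have h1 := colAux_succ_mem e c d l
  rw [hc] at h1
  refine mem_of_superset (inter_mem h1 (notin_list_mem e hnp l)) fun x hx => ?_
  refine ⟨?_, hx.1⟩
  rw [List.nodup_append]
  exact ⟨hl, List.nodup_singleton _, by
    intro a ha b hb hab
    simp only [List.mem_singleton] at hb
    subst hb
    subst hab
    exact hx.2 ha⟩

lemma sqaux_of_colAux (e : Ultrafilter S) (hnp : ∀ s : S, e ≠ pure s) {N : ℕ}
    (c : Finset S → Fin N) (i : Fin N) :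
    ∀ d : ℕ, ∀ l : List S, l.Nodup → colAux e c d l = i → SQAux e c i d l := by
  intro d
  induction d with
  | zero => intro l hl hc; exact ⟨hl, hc⟩
  | succ d ih =>
    intro l hl hc
    show {x | SQAux e c i d (l ++ [x])} ∈ e
    exact mem_of_superset (colAux_step e hnp c d hl hc) fun x hx => ih _ hx.1 hx.2

/-! ### lProd lemmas -/

lemma lProd_congr_entries {f g : List S} {α : Finset ℕ}
    (h : ∀ t ∈ α, f[t]? = g[t]?) : lProd f α = lProd g α := by
  unfold lProd oListProd
  congr 1
  refine List.map_congr_left fun t ht => ?_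
  rw [h t ((Finset.mem_sort _).1 ht)]

lemma lProd_append_right (f g : List S) (α : Finset ℕ)
    (h : ∀ t ∈ α, t < f.length) : lProd (f ++ g) α = lProd f α :=
  lProd_congr_entries fun t ht => by
    rw [List.getElem?_append, if_pos (h t ht)]

lemma lProd_empty (f : List S) : lProd f ∅ = 1 := by
  simp [lProd, oListProd]

lemma sort_insert_max {β : Finset ℕ} {n : ℕ} (h : ∀ t ∈ β, t < n) :
    (insert n β).sort (· ≤ ·) = β.sort (· ≤ ·) ++ [n] := by
  have hnm : n ∉ β := fun hn => lt_irrefl _ (h _ hn)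
  refine (fun hp hs1 hs2 => List.Perm.eq_of_pairwise' hs1 hs2 hp) ?_ (Finset.pairwise_sort _ _) ?_
  · exact ((((Finset.sort_perm_toList _ _).trans (Finset.toList_insert hnm)).trans
      (List.Perm.cons _ (Finset.sort_perm_toList _ _).symm)).trans
      (List.perm_append_singleton _ _).symm)
  · rw [List.pairwise_append]
    refine ⟨Finset.pairwise_sort _ _, List.pairwise_singleton _ _, ?_⟩
    intro a ha b hb
    simp only [List.mem_singleton] at hb
    subst hb
    exact le_of_lt (h a ((Finset.mem_sort _).1 ha))

lemma lProd_insert_max (f : List S) (s : S) (β : Finset ℕ)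
    (h : ∀ t ∈ β, t < f.length) :
    lProd (f ++ [s]) (insert f.length β) = lProd f β * (s : WithOne S) := by
  unfold lProd oListProd
  rw [sort_insert_max h, List.map_append, List.prod_append]
  congr 1
  · refine congrArg _ (List.map_congr_left fun t ht => ?_)
    have htβ := (Finset.mem_sort _).1 ht
    rw [List.getElem?_append, if_pos (h t htβ)]
  · simp [List.getElem?_concat_length]

/-! ### the tree condition -/

def CondAt (e : Ultrafilter S) {N : ℕ} (c : Finset S → Fin N) (i : Fin N)
    (n : ℕ) (j : ℕ) (α : Fin (j+1) → Finset ℕ) (f : List S) : Prop :=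
  (∀ a, (α a).Nonempty) → (∀ a, ∀ t ∈ α a, t < f.length) →
  (∀ a b : Fin (j+1), a < b → ∀ s ∈ α a, ∀ t ∈ α b, s < t) →
  ∃ p : Fin (j+1) → S, (∀ a, (p a : WithOne S) = lProd f (α a)) ∧
    p (Fin.last j) ∈ star e (Ed e c i (n - j) (List.ofFn fun b : Fin j => p b.castSucc))

lemma condAt_extend (e : Ultrafilter S) (hid : e * e = e)
    (hnp : ∀ s : S, e ≠ pure s) {N : ℕ} (c : Finset S → Fin N) (i : Fin N) (n : ℕ)
    (hroot : SQAux e c i (n+1) [])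
    (f : List S) (hf : ∀ j, j ≤ n → ∀ α, CondAt e c i n j α f)
    (j : ℕ) (hj : j ≤ n) (α : Fin (j+1) → Finset ℕ) :
    ∀ᶠ s in (e : Filter S), CondAt e c i n j α (f ++ [s]) := by
  by_cases hhyp : (∀ a, (α a).Nonempty) ∧
      (∀ a, ∀ t ∈ α a, t < f.length + 1) ∧
      (∀ a b : Fin (j+1), a < b → ∀ s ∈ α a, ∀ t ∈ α b, s < t)
  swap
  · refine Filter.Eventually.of_forall fun s h1 h2 h3 => absurd ⟨h1, ?_, h3⟩ hhyp
    intro a t ht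
    have := h2 a t ht
    simpa using this
  obtain ⟨h1, h2, h3⟩ := hhyp
  by_cases hnew : ∀ a, ∀ t ∈ α a, t < f.length
  · refine Filter.Eventually.of_forall fun s _ _ _ => ?_
    obtain ⟨p, hp, hps⟩ := hf j hj α h1 hnew h3
    exact ⟨p, fun a => (hp a).trans (lProd_append_right _ _ _ (hnew a)).symm, hps⟩
  push_neg at hnew
  obtain ⟨a₀, t₀, ht₀, ht₀'⟩ := hnew
  have ht0 : t₀ = f.length := by
    have := h2 a₀ t₀ ht₀; omega
  subst ht0
  have hmemlast : f.length ∈ α (Fin.last j) := by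
    have ha₀ : a₀ = Fin.last j := by
      by_contra hne
      obtain ⟨t', ht'⟩ := h1 (Fin.last j)
      have hlt := h3 a₀ (Fin.last j) (lt_of_le_of_ne (Fin.le_last a₀) hne) _ ht₀ t' ht'
      have := h2 (Fin.last j) t' ht'
      omega
    rw [← ha₀]; exact ht₀
  set β := (α (Fin.last j)).erase f.length with hβdef
  have hβlt : ∀ t ∈ β, t < f.length := by
    intro t ht
    have h2' := h2 _ _ (Finset.mem_of_mem_erase ht)
    have := Finset.ne_of_mem_erase ht
    omega
  have hαlast : α (Fin.last j) = insert f.length β :=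
    (Finset.insert_erase hmemlast).symm
  have hlt_of_ne : ∀ a : Fin (j+1), a ≠ Fin.last j → ∀ t ∈ α a, t < f.length := by
    intro a ha t ht
    exact h3 a (Fin.last j) (lt_of_le_of_ne (Fin.le_last a) ha) t ht _ hmemlast
  -- products of the first j blocks
  obtain ⟨p₀, hp₀, hE⟩ :
      ∃ p₀ : Fin j → S, (∀ b : Fin j, (p₀ b : WithOne S) = lProd f (α b.castSucc)) ∧
        SQAux e c i (n - j + 1) (List.ofFn p₀) := by
    match j, hj with
    | 0, _ =>
      refine ⟨Fin.elim0, fun b => b.elim0, ?_⟩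
      simpa using hroot
    | (j'+1), hj =>
      have hj' : j' ≤ n := le_trans (Nat.le_succ j') hj
      obtain ⟨p₀, hp₀, hstar⟩ := hf j' hj' (fun b => α b.castSucc)
        (fun b => h1 _)
        (fun b t ht => hlt_of_ne _ (Fin.ne_last_of_lt (Fin.castSucc_lt_last b)) t ht)
        (fun a b hab s hs t ht =>
          h3 _ _ (by exact Fin.castSucc_lt_castSucc_iff.2 hab) s hs t ht)
      refine ⟨p₀, hp₀, ?_⟩
      have hmem := star_subset _ _ hstar
      have hsq : SQAux e c i (n - j')
          ((List.ofFn fun b : Fin j' => p₀ b.castSucc) ++ [p₀ (Fin.last j')]) := hmem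
      have harith : n - j' = n - (j'+1) + 1 := by omega
      rw [harith] at hsq
      have hl : (List.ofFn fun b : Fin j' => p₀ b.castSucc) ++ [p₀ (Fin.last j')]
          = List.ofFn p₀ := by
        rw [List.ofFn_succ', List.concat_eq_append]
      rwa [hl] at hsq
  set l := List.ofFn p₀ with hldef
  have hEd : Ed e c i (n - j) l ∈ e := hE
  have hx : ∀ᶠ (s : S) in (e : Filter S), ∃ x : S,
      (x : WithOne S) = lProd f β * (s : WithOne S) ∧ x ∈ star e (Ed e c i (n - j) l) := by
    rcases Finset.eq_empty_or_nonempty β with hβe | hβne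
    · have hstar : star e (Ed e c i (n - j) l) ∈ e := star_mem e hid hEd
      filter_upwards [hstar] with s hs
      exact ⟨s, by rw [hβe, lProd_empty, one_mul], hs⟩
    · obtain ⟨p', hp', hp's⟩ := hf j hj (Function.update α (Fin.last j) β)
        (by
          intro a
          rcases eq_or_ne a (Fin.last j) with rfl | ha
          · rw [Function.update_self]; exact hβne
          · rw [Function.update_of_ne ha]; exact h1 a)
        (by
          intro a t ht
          rcases eq_or_ne a (Fin.last j) with rfl | ha
          · rw [Function.update_self] at ht; exact hβlt t ht
          · rw [Function.update_of_ne ha] at ht; exact hlt_of_ne a ha t ht)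
        (by
          intro a b hab s hs t ht
          have hane : a ≠ Fin.last j := Fin.ne_last_of_lt hab
          rw [Function.update_of_ne hane] at hs
          rcases eq_or_ne b (Fin.last j) with rfl | hb
          · rw [Function.update_self] at ht
            exact h3 a _ hab s hs t (Finset.mem_of_mem_erase ht)
          · rw [Function.update_of_ne hb] at ht
            exact h3 a b hab s hs t ht)
      have hps : (fun b : Fin j => p' b.castSucc) = p₀ := by
        funext b
        have hne : b.castSucc ≠ Fin.last j := Fin.ne_last_of_lt (Fin.castSucc_lt_last b)
        have := hp' b.castSucc
        rw [Function.update_of_ne hne] at this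
        exact WithOne.coe_inj.1 (this.trans (hp₀ b).symm)
      rw [hps] at hp's
      have hg := star_step e hid hp's
      filter_upwards [hg] with s hs
      refine ⟨p' (Fin.last j) * s, ?_, hs⟩
      have := hp' (Fin.last j)
      rw [Function.update_self] at this
      rw [WithOne.coe_mul, this]
  filter_upwards [hx] with s hsx
  intro _ _ _
  obtain ⟨x, hxeq, hxstar⟩ := hsx
  refine ⟨Fin.snoc p₀ x, ?_, ?_⟩
  · intro a
    refine Fin.lastCases ?_ ?_ a
    · rw [Fin.snoc_last, hαlast, lProd_insert_max f s β hβlt, hxeq]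
    · intro b
      rw [Fin.snoc_castSucc, hp₀ b,
        lProd_append_right f [s] _
          (hlt_of_ne b.castSucc (Fin.ne_last_of_lt (Fin.castSucc_lt_last b)))]
  · have hps : (fun b : Fin j => (Fin.snoc p₀ x : Fin (j+1) → S) b.castSucc) = p₀ := by
      funext b; simp
    rw [Fin.snoc_last, hps, ← hldef]
    exact hxstar

end STRL

open STRL Filter

/-- **Simultaneous tree lemma.**  Let `S` be a semigroup with a non-principal
idempotent ultrafilter `e`, and for each `m ∈ {1,…,k}` (indexed by `m : Fin k`,
standing for `m+1`) let `[S]^{m+1}` be coloured by `c m : [S]^{m+1} → Fin (r m)`.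
Then there are colours `i m` (determining the monochrome sets
`A^{(m+1)} ⊆ [S]^{m+1}` of colour `i m`) and a single tree `T ⊆ S^{<ω}` such that
for every `f ∈ T` one has `T(f) ∈ e`, and for every `m` and all
`α 1 < … < α (m+1) ⊆ dom f` in `P_f(ω)` the set
`{∏_{t∈α 1} f(t), …, ∏_{t∈α (m+1)} f(t)}` has `m+1` elements and colour `i m`. -/
theorem simultaneous_tree_ramsey_lemma
    {S : Type*} [Semigroup S] [DecidableEq S]
    (e : Ultrafilter S) (hnp : ∀ s : S, e ≠ pure s) (hid : e * e = e)
    (k : ℕ) (r : Fin k → ℕ) (hr : ∀ m, 1 ≤ r m)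
    (c : (m : Fin k) → Finset S → Fin (r m)) :
    ∃ (i : (m : Fin k) → Fin (r m)) (T : Set (List S)), IsTree T ∧
      ∀ f ∈ T,
        treeSucc T f ∈ e ∧
        ∀ m : Fin k, ∀ α : Fin (m.1 + 1) → Finset ℕ,
          (∀ j, (α j).Nonempty) →
          (∀ j, ∀ t ∈ α j, t < f.length) →
          (∀ j j' : Fin (m.1 + 1), j < j' → ∀ s ∈ α j, ∀ t ∈ α j', s < t) →
          ∃ p : Fin (m.1 + 1) → S,
            (∀ j, (p j : WithOne S) = lProd f (α j)) ∧
            (Finset.image p Finset.univ).card = m.1 + 1 ∧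
            c m (Finset.image p Finset.univ) = i m := by
  classical
  set i : (m : Fin k) → Fin (r m) := fun m => colAux e (c m) (m.1 + 1) [] with hidef
  have hroot : ∀ m : Fin k, SQAux e (c m) (i m) (m.1 + 1) [] := fun m =>
    sqaux_of_colAux e hnp (c m) (i m) _ [] List.nodup_nil rfl
  set T : Set (List S) :=
    {f | ∀ m : Fin k, ∀ j, j ≤ m.1 → ∀ α, CondAt e (c m) (i m) m.1 j α f} with hTdef
  have hnil : [] ∈ T := by
    intro m j hj α h1 h2 h3
    obtain ⟨t, ht⟩ := h1 0
    exact absurd (h2 0 t ht) (by simp)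
  have hpre : ∀ g ∈ T, ∀ f : List S, f <+: g → f ∈ T := by
    intro g hg f hfg
    obtain ⟨f2, rfl⟩ := hfg
    intro m j hj α h1 h2 h3
    obtain ⟨p, hp, hps⟩ := hg m j hj α h1
      (fun a t ht => lt_of_lt_of_le (h2 a t ht) (by simp)) h3
    exact ⟨p, fun a => (hp a).trans (lProd_append_right f f2 (α a) (h2 a)), hps⟩
  have hsucc : ∀ f ∈ T, treeSucc T f ∈ e := by
    intro f hf
    have key : ∀ᶠ (s : S) in (e : Filter S),
        ∀ idx : (m : Fin k) × (jf : Fin (m.1+1)) × (Fin (jf.1+1) → Finset (Fin (f.length+1))),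
          CondAt e (c idx.1) (i idx.1) idx.1.1 idx.2.1.1
            (fun a => (idx.2.2 a).image Fin.val) (f ++ [s]) := by
      rw [Filter.eventually_all]
      rintro ⟨m, jf, A⟩
      exact condAt_extend e hid hnp (c m) (i m) m.1 (hroot m) f
        (fun j hj α => hf m j hj α) jf.1 (Nat.lt_succ_iff.1 jf.isLt) _
    have key2 : ∀ᶠ (s : S) in (e : Filter S), f ++ [s] ∈ T := by
      refine key.mono fun s hs => ?_
      intro m j hj α h1 h2 h3
      have h2' : ∀ a, ∀ t ∈ α a, t < f.length + 1 := by
        intro a t ht; have := h2 a t ht; simpa using this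
      have hA := hs ⟨m, ⟨j, Nat.lt_succ_of_le hj⟩, fun a => (α a).attachFin (h2' a)⟩
      have hEq : (fun a => (((α a).attachFin (h2' a)).image Fin.val)) = α := by
        funext a; ext t
        simp only [Finset.mem_image, Finset.mem_attachFin]
        constructor
        · rintro ⟨x, hx, rfl⟩; exact hx
        · intro ht; exact ⟨⟨t, h2' a t ht⟩, ht, rfl⟩
      rw [hEq] at hA
      exact hA h1 h2 h3
    exact key2
  refine ⟨i, T, ⟨⟨[], hnil⟩, hpre⟩, fun f hf => ⟨hsucc f hf, ?_⟩⟩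
  intro m α h1 h2 h3
  obtain ⟨p, hp, hps⟩ := hf m m.1 le_rfl α h1 h2 h3
  have hmem := star_subset _ _ hps
  have hsq : SQAux e (c m) (i m) (m.1 - m.1)
      ((List.ofFn fun b : Fin m.1 => p b.castSucc) ++ [p (Fin.last m.1)]) := hmem
  rw [Nat.sub_self] at hsq
  have hl : (List.ofFn fun b : Fin m.1 => p b.castSucc) ++ [p (Fin.last m.1)]
      = List.ofFn p := by
    rw [List.ofFn_succ', List.concat_eq_append]
  rw [hl] at hsq
  obtain ⟨hnd, hcol⟩ : (List.ofFn p).Nodup ∧ (c m) (List.ofFn p).toFinset = i m := hsq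
  have hinj : Function.Injective p := List.nodup_ofFn.1 hnd
  have hset : (List.ofFn p).toFinset = Finset.image p Finset.univ := by
    ext x
    simp only [List.mem_toFinset, List.mem_ofFn, Set.mem_range, Finset.mem_image,
      Finset.mem_univ, true_and]
  refine ⟨p, hp, ?_, ?_⟩
  · rw [Finset.card_image_of_injective _ hinj, Finset.card_univ, Fintype.card_fin]
  · rw [← hset]; exact hcol
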